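/- Let r ≥ 4 and s ≥ 1, and let H be a connected induced regular subgraph of the lexicographic product C_r[K_s] with block intersection sizes x₀, …, x_{r-1} (indices mod r). If some block is missed by H, i.e. xᵢ = 0 for some i, then H is a clique (contained in the union of two consecutive blocks). -/

import Mathlib

/-- The lexicographic product of the cycle `C_r` with the complete graph `K_s`:
vertices `(i,a)` and `(j,b)` are adjacent iff `i = j` (and `a ≠ b`) or `i` and `j`
are consecutive modulo `r`. -/
def lexCycle (r s : ℕ) : SimpleGraph (ZMod r × Fin s) :=
  SimpleGraph.fromRel (fun a b => a.1 = b.1 ∨ a.1 = b.1 + 1)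

lemma reach_ind {α : Type*} {G : SimpleGraph α} (P : α → Prop)
    (h : ∀ a b, P a → G.Adj a b → P b) {u w : α} (hrw : G.Reachable u w) (hu : P u) : P w := by
  obtain ⟨p⟩ := hrw
  induction p with
  | nil => exact hu
  | cons h' p ih => exact ih (h _ _ hu h')

lemma adj_block {r s : ℕ} {v w : ZMod r × Fin s} (h : (lexCycle r s).Adj v w) :
    w.1 = v.1 ∨ w.1 = v.1 - 1 ∨ w.1 = v.1 + 1 := by
  rw [lexCycle, SimpleGraph.fromRel_adj] at h
  obtain ⟨-, h⟩ := h
  rcases h with (h | h) | (h | h)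
  · exact Or.inl h.symm
  · exact Or.inr (Or.inl (eq_sub_of_add_eq h.symm))
  · exact Or.inl h
  · exact Or.inr (Or.inr h)

lemma deg_lemma (r s : ℕ) (hr : 4 ≤ r) (S : Set (ZMod r × Fin s)) (v : ZMod r × Fin s)
    (hv : v ∈ S) :
    (S ∩ {w | (lexCycle r s).Adj v w}).ncard + 1 =
      (S ∩ {w | w.1 = v.1 - 1}).ncard + (S ∩ {w | w.1 = v.1}).ncard +
        (S ∩ {w | w.1 = v.1 + 1}).ncard := by
  haveI : NeZero r := ⟨by omega⟩
  have h1 : (1 : ZMod r) ≠ 0 := by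
    intro h
    have hd := (ZMod.natCast_eq_zero_iff 1 r).mp (by push_cast; exact h)
    exact absurd (Nat.le_of_dvd one_pos hd) (by omega)
  have h2 : (2 : ZMod r) ≠ 0 := by
    intro h
    have hd := (ZMod.natCast_eq_zero_iff 2 r).mp (by push_cast; exact h)
    exact absurd (Nat.le_of_dvd two_pos hd) (by omega)
  have hne1 : v.1 - 1 ≠ v.1 := fun h => h1 (by linear_combination -h)
  have hne2 : v.1 + 1 ≠ v.1 := fun h => h1 (by linear_combination h)
  have hne3 : v.1 - 1 ≠ v.1 + 1 := fun h => h2 (by linear_combination -h)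
  have hsplit : S ∩ {w | (lexCycle r s).Adj v w} =
      ((S ∩ {w | w.1 = v.1 - 1}) ∪ ((S ∩ {w | w.1 = v.1}) \ {v})) ∪
        (S ∩ {w | w.1 = v.1 + 1}) := by
    ext w
    simp only [lexCycle, SimpleGraph.fromRel_adj, Set.mem_inter_iff, Set.mem_setOf_eq,
      Set.mem_union, Set.mem_diff, Set.mem_singleton_iff]
    constructor
    · rintro ⟨hw, hne, (h | h) | (h | h)⟩
      · exact Or.inl (Or.inr ⟨⟨hw, h.symm⟩, Ne.symm hne⟩)
      · exact Or.inl (Or.inl ⟨hw, eq_sub_of_add_eq h.symm⟩)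
      · exact Or.inl (Or.inr ⟨⟨hw, h⟩, Ne.symm hne⟩)
      · exact Or.inr ⟨hw, h⟩
    · rintro ((⟨hw, h⟩ | ⟨⟨hw, h⟩, hne⟩) | ⟨hw, h⟩)
      · refine ⟨hw, fun e => hne1 (by rw [← h, e]), Or.inl (Or.inr ?_)⟩
        rw [h]; ring
      · exact ⟨hw, Ne.symm hne, Or.inl (Or.inl h.symm)⟩
      · refine ⟨hw, fun e => hne2 (by rw [← h, e]), Or.inr (Or.inr h)⟩
  have fin : ∀ A : Set (ZMod r × Fin s), A.Finite := fun A => A.toFinite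
  have d1 : Disjoint (S ∩ {w | w.1 = v.1 - 1}) ((S ∩ {w | w.1 = v.1}) \ {v}) := by
    rw [Set.disjoint_left]
    rintro w ⟨-, h⟩ ⟨⟨-, h'⟩, -⟩
    exact hne1 (h.symm.trans h')
  have d2 : Disjoint ((S ∩ {w | w.1 = v.1 - 1}) ∪ ((S ∩ {w | w.1 = v.1}) \ {v}))
      (S ∩ {w | w.1 = v.1 + 1}) := by
    rw [Set.disjoint_left]
    rintro w (⟨-, h⟩ | ⟨⟨-, h⟩, -⟩) ⟨-, h'⟩
    · exact hne3 (h.symm.trans h')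
    · exact hne2 (h'.symm.trans h)
  rw [hsplit, Set.ncard_union_eq d2 (fin _) (fin _), Set.ncard_union_eq d1 (fin _) (fin _),
    Set.ncard_diff_singleton_of_mem (show v ∈ S ∩ {w | w.1 = v.1} from ⟨hv, rfl⟩)]
  have hpos : 1 ≤ (S ∩ {w | w.1 = v.1}).ncard :=
    (Set.ncard_pos (fin _)).mpr ⟨v, hv, rfl⟩
  omega

theorem lexCycle_regular_missed_block (r s : ℕ) (hr : 4 ≤ r) (hs : 1 ≤ s)
    (S : Set (ZMod r × Fin s))
    (hconn : ((lexCycle r s).induce S).Connected)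
    (hreg : ∃ d : ℕ, ∀ v ∈ S, (S ∩ {w | (lexCycle r s).Adj v w}).ncard = d)
    (hmiss : ∃ i : ZMod r, ∀ a : Fin s, ((i, a) : ZMod r × Fin s) ∉ S) :
    (lexCycle r s).IsClique S ∧
    ∃ i : ZMod r, S ⊆ {v | v.1 = i ∨ v.1 = i + 1} := by
  classical
  haveI : NeZero r := ⟨by omega⟩
  obtain ⟨d, hd⟩ := hreg
  obtain ⟨i0, hi0⟩ := hmiss
  have fin : ∀ A : Set (ZMod r × Fin s), A.Finite := fun A => A.toFinite
  have hempty : ∀ k : ZMod r, (S ∩ {w | w.1 = k}).ncard = 0 → ∀ w ∈ S, w.1 ≠ k := by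
    intro k hk w hw he
    have hE : S ∩ {w | w.1 = k} = ∅ := (Set.ncard_eq_zero (fin _)).mp hk
    have hm : w ∈ S ∩ {w | w.1 = k} := ⟨hw, he⟩
    rw [hE] at hm; exact hm
  have hnonempty : ∀ k : ZMod r, 0 < (S ∩ {w | w.1 = k}).ncard → ∃ w ∈ S, w.1 = k := by
    intro k hk
    obtain ⟨w, hw, he⟩ := (Set.ncard_pos (fin _)).mp hk
    exact ⟨w, hw, he⟩
  have hx0 : (S ∩ {w | w.1 = i0}).ncard = 0 := by
    have hE : S ∩ {w | w.1 = i0} = ∅ := by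
      ext w
      simp only [Set.mem_inter_iff, Set.mem_setOf_eq, Set.mem_empty_iff_false, iff_false,
        not_and]
      intro hw he
      exact hi0 w.2 ((Prod.ext he rfl : w = (i0, w.2)) ▸ hw)
    rw [hE]; exact Set.ncard_empty _
  obtain ⟨u⟩ := hconn.nonempty
  have hex : ∃ t : ℕ, 0 < t ∧ 0 < (S ∩ {w | w.1 = i0 + (t : ZMod r)}).ncard := by
    refine ⟨(u.1.1 - i0).val, ?_, ?_⟩
    · by_contra h
      push_neg at h
      have h0 : u.1.1 - i0 = 0 := (ZMod.val_eq_zero _).mp (by omega)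
      have he : u.1.1 = i0 := sub_eq_zero.mp h0
      exact hi0 u.1.2 ((Prod.ext he rfl : u.1 = (i0, u.1.2)) ▸ u.2)
    · have hc : (((u.1.1 - i0).val : ℕ) : ZMod r) = u.1.1 - i0 := ZMod.natCast_rightInverse _
      rw [hc, show i0 + (u.1.1 - i0) = u.1.1 from by ring]
      exact (Set.ncard_pos (fin _)).mpr ⟨u.1, u.2, rfl⟩
  set j := Nat.find hex with hj
  have hjspec := Nat.find_spec hex
  have hj1 : 0 < j := hjspec.1
  set i' : ZMod r := i0 + ((j - 1 : ℕ) : ZMod r) with hi'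
  have hcast : i' + 1 = i0 + (j : ZMod r) := by
    rw [hi', add_assoc]
    congr 1
    rw [show ((j - 1 : ℕ) : ZMod r) + 1 = ((j - 1 + 1 : ℕ) : ZMod r) from by push_cast; ring,
      Nat.sub_add_cancel hj1]
  have hxi' : (S ∩ {w | w.1 = i'}).ncard = 0 := by
    rcases eq_or_lt_of_le (show 1 ≤ j from hj1) with h | h
    · rw [hi', ← h]
      norm_num
      exact hx0
    · have hmin := Nat.find_min hex (show j - 1 < j by omega)
      by_contra hp
      rw [hi'] at hp
      exact hmin ⟨by omega, by omega⟩
  have hx1 : 0 < (S ∩ {w | w.1 = i' + 1}).ncard := by rw [hcast]; exact hjspec.2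
  have hdeg : ∀ v ∈ S, d + 1 = (S ∩ {w | w.1 = v.1 - 1}).ncard +
      (S ∩ {w | w.1 = v.1}).ncard + (S ∩ {w | w.1 = v.1 + 1}).ncard := by
    intro v hv
    rw [← hd v hv]
    exact deg_lemma r s hr S v hv
  obtain ⟨v1, hv1S, hv1⟩ := hnonempty _ hx1
  have h1 := hdeg v1 hv1S
  rw [hv1, show i' + 1 - 1 = i' from by ring] at h1
  have hsubset : ∀ w ∈ S, w.1 = i' + 1 ∨ w.1 = i' + 1 + 1 := by
    by_cases hc : (S ∩ {w | w.1 = i' + 1 + 1}).ncard = 0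
    · intro w hw
      left
      refine reach_ind (G := (lexCycle r s).induce S) (fun a => (a : ZMod r × Fin s).1 = i' + 1)
        ?_ (hconn.preconnected ⟨v1, hv1S⟩ ⟨w, hw⟩) hv1
      intro a b pa hab
      have hadj : (lexCycle r s).Adj a.1 b.1 := hab
      rcases adj_block hadj with h | h | h
      · rw [h, pa]
      · exfalso
        exact hempty i' hxi' b.1 b.2 (by rw [h, pa]; ring)
      · exfalso
        exact hempty _ hc b.1 b.2 (by rw [h, pa])
    · obtain ⟨v2, hv2S, hv2⟩ := hnonempty _ (Nat.pos_of_ne_zero hc)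
      have h2 := hdeg v2 hv2S
      rw [hv2, show i' + 1 + 1 - 1 = i' + 1 from by ring] at h2
      have hx3 : (S ∩ {w | w.1 = i' + 1 + 1 + 1}).ncard = 0 := by omega
      intro w hw
      refine reach_ind (G := (lexCycle r s).induce S)
        (fun a => (a : ZMod r × Fin s).1 = i' + 1 ∨ (a : ZMod r × Fin s).1 = i' + 1 + 1)
        ?_ (hconn.preconnected ⟨v1, hv1S⟩ ⟨w, hw⟩) (Or.inl hv1)
      intro a b pa hab
      have hadj : (lexCycle r s).Adj a.1 b.1 := hab
      rcases pa with pa | pa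
      · rcases adj_block hadj with h | h | h
        · exact Or.inl (h.trans pa)
        · exfalso
          exact hempty i' hxi' b.1 b.2 (by rw [h, pa]; ring)
        · exact Or.inr (by rw [h, pa])
      · rcases adj_block hadj with h | h | h
        · exact Or.inr (h.trans pa)
        · exact Or.inl (by rw [h, pa]; ring)
        · exfalso
          exact hempty _ hx3 b.1 b.2 (by rw [h, pa])
  constructor
  · intro v hv w hw hne
    rw [lexCycle, SimpleGraph.fromRel_adj]
    refine ⟨hne, ?_⟩
    rcases hsubset v hv with h | h <;> rcases hsubset w hw with h' | h'
    · exact Or.inl (Or.inl (h.trans h'.symm))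
    · exact Or.inr (Or.inr (by rw [h', h]))
    · exact Or.inl (Or.inr (by rw [h, h']))
    · exact Or.inl (Or.inl (h.trans h'.symm))
  · exact ⟨i' + 1, fun v hv => hsubset v hv⟩
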